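/- Let V be a real vector space with a symmetric bilinear form of signature (1, n-1), and let P, s ∈ V satisfy P² = 1, s² = 1, and P·s > 1 (equivalently the 2×2 Gram determinant 1 - (P·s)² < 0, so span(P,s) has signature (1,1)). Then for any Q ∈ V linearly independent of P and s, if sgn(Q·P)·sgn(Q·s) < 0 then Q² < 0. -/

import Mathlib

private lemma aux_nonpos {n : ℕ} [NeZero n] (x p : Fin n → ℝ)
    (hp : ∑ i, (if i = 0 then (1:ℝ) else -1) * p i * p i = 1)
    (hxp : ∑ i, (if i = 0 then (1:ℝ) else -1) * x i * p i = 0) :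
    ∑ i, (if i = 0 then (1:ℝ) else -1) * x i * x i ≤ 0 := by
  classical
  set S := Finset.univ.erase (0 : Fin n) with hS
  have h0 : (0 : Fin n) ∈ Finset.univ := Finset.mem_univ _
  have split : ∀ f : Fin n → ℝ,
      ∑ i, (if i = 0 then (1:ℝ) else -1) * f i = f 0 - ∑ i ∈ S, f i := by
    intro f
    rw [← Finset.add_sum_erase _ _ h0]
    have : ∑ i ∈ S, (if i = 0 then (1:ℝ) else -1) * f i = ∑ i ∈ S, -(f i) :=
      Finset.sum_congr rfl fun i hi => by
        rw [if_neg (Finset.mem_erase.mp hi).1]; ring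
    rw [this, Finset.sum_neg_distrib, ← sub_eq_add_neg]
    norm_num
  have hp' : p 0 * p 0 = 1 + ∑ i ∈ S, p i ^ 2 := by
    have h := split (fun i => p i * p i)
    simp only [mul_assoc] at hp h
    rw [h] at hp
    simp only [← sq] at hp ⊢
    linarith
  have hxp' : x 0 * p 0 = ∑ i ∈ S, x i * p i := by
    have h := split (fun i => x i * p i)
    simp only [mul_assoc] at hxp h
    rw [h] at hxp
    linarith
  have goal' : ∑ i, (if i = 0 then (1:ℝ) else -1) * x i * x i
      = x 0 * x 0 - ∑ i ∈ S, x i ^ 2 := by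
    have h := split (fun i => x i * x i)
    simp only [mul_assoc] at h ⊢
    rw [h]
    simp [sq]
  rw [goal']
  have hCS := Finset.sum_mul_sq_le_sq_mul_sq S x p
  have hCS2 : (x 0 * p 0)^2 ≤ (∑ i ∈ S, x i ^ 2) * (∑ i ∈ S, p i ^ 2) := by
    rw [hxp']; exact hCS
  have hXn : (0:ℝ) ≤ ∑ i ∈ S, x i ^ 2 := Finset.sum_nonneg fun i _ => sq_nonneg _
  have hPn : (0:ℝ) ≤ ∑ i ∈ S, p i ^ 2 := Finset.sum_nonneg fun i _ => sq_nonneg _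
  nlinarith [hCS2, hp', hXn, hPn, sq_nonneg (x 0), sq_nonneg (p 0),
    mul_nonneg hXn hPn]

/-- In a real quadratic space of signature `(1, n-1)`, with `P² = s² = 1`, `P·s > 1`
(so that `span(P,s)` has signature `(1,1)`), any vector `Q` linearly independent of `P`
and `s` whose pairings with `P` and `s` have opposite signs satisfies `Q² < 0`. -/
theorem neg_norm_of_opposite_signs {n : ℕ} [NeZero n] {V : Type*}
    [AddCommGroup V] [Module ℝ V]
    (B : V →ₗ[ℝ] V →ₗ[ℝ] ℝ) (hsymm : ∀ x y, B x y = B y x)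
    (b : Module.Basis (Fin n) ℝ V)
    (hsig : ∀ i j, B (b i) (b j) =
      if i = j then (if i = 0 then (1 : ℝ) else -1) else 0)
    (P s : V) (hP : B P P = 1) (hs : B s s = 1) (hPs : 1 < B P s)
    (Q : V) (hind : LinearIndependent ℝ ![Q, P, s])
    (hsgn : Real.sign (B Q P) * Real.sign (B Q s) < 0) :
    B Q Q < 0 := by
  classical
  have Bform : ∀ x y : V, B x y =
      ∑ i, (if i = 0 then (1:ℝ) else -1) * b.repr x i * b.repr y i := by
    intro x y
    conv_lhs => rw [← b.sum_repr x, ← b.sum_repr y]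
    simp only [map_sum, map_smul, LinearMap.sum_apply, LinearMap.smul_apply,
      smul_eq_mul, hsig, mul_ite, mul_zero, mul_one, mul_neg,
      Finset.sum_ite_eq', Finset.mem_univ, if_true, ite_true]
    refine Finset.sum_congr rfl fun i _ => ?_
    split_ifs <;> ring
  set m := B P s with hm
  set a := B Q P with ha
  set c := B Q s with hc
  have hm2 : 1 - m^2 ≠ 0 := by nlinarith
  set α : ℝ := (a - c*m)/(1 - m^2) with hα
  set β : ℝ := (c - a*m)/(1 - m^2) with hβ
  have hQ : Q = (Q - α • P - β • s) + α • P + β • s := by abel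
  set R : V := Q - α • P - β • s with hR
  have hsP : B s P = m := by rw [hsymm]
  have hBRP : B R P = 0 := by
    simp only [hR, map_sub, map_smul, LinearMap.sub_apply, LinearMap.smul_apply,
      smul_eq_mul, hP, hsP, ← ha]
    rw [hα, hβ]
    field_simp
    ring
  have hBRs : B R s = 0 := by
    simp only [hR, map_sub, map_smul, LinearMap.sub_apply, LinearMap.smul_apply,
      smul_eq_mul, hs, ← hm, ← hc]
    rw [hα, hβ]
    field_simp
    ring
  have hPR : B P R = 0 := by rw [hsymm]; exact hBRP
  have hsR : B s R = 0 := by rw [hsymm]; exact hBRs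
  have hRR : B R R ≤ 0 := by
    have := aux_nonpos (fun i => b.repr R i) (fun i => b.repr P i)
      (by rw [← Bform]; exact hP) (by rw [← Bform]; exact hBRP)
    rw [Bform R R]; exact this
  have expand : B Q Q = B R R + (α^2 + β^2 + 2*α*β*m) := by
    conv_lhs => rw [hQ]
    simp only [map_add, map_smul, LinearMap.add_apply, LinearMap.smul_apply,
      smul_eq_mul, hBRP, hBRs, hPR, hsR, hP, hs, hsP, ← hm]
    ring
  have hac : a * c < 0 := by
    rcases lt_trichotomy a 0 with h | h | h
    · rcases lt_trichotomy c 0 with h' | h' | h'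
      · rw [Real.sign_of_neg h, Real.sign_of_neg h'] at hsgn; norm_num at hsgn
      · rw [h', Real.sign_zero, mul_zero] at hsgn; norm_num at hsgn
      · exact mul_neg_of_neg_of_pos h h'
    · rw [h, Real.sign_zero, zero_mul] at hsgn; norm_num at hsgn
    · rcases lt_trichotomy c 0 with h' | h' | h'
      · exact mul_neg_of_pos_of_neg h h'
      · rw [h', Real.sign_zero, mul_zero] at hsgn; norm_num at hsgn
      · rw [Real.sign_of_pos h, Real.sign_of_pos h'] at hsgn; norm_num at hsgn
  have hkey : α^2 + β^2 + 2*α*β*m < 0 := by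
    have heq : α^2 + β^2 + 2*α*β*m = (a^2 + c^2 - 2*a*c*m)/(1 - m^2) := by
      rw [hα, hβ]
      field_simp
      ring
    rw [heq]
    apply div_neg_of_pos_of_neg
    · nlinarith
    · nlinarith
  linarith [expand, hRR, hkey]
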